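/- Let T₀, T₁ be backward weighted shifts on Hilbert spaces H₀, H₁ with orthonormal bases (e_n), (f_n): T₀ e_n = u_{n-1} e_{n-1}, T₁ f_n = v_{n-1} f_{n-1}, with weights u_n = √((n+1)/(n+λ₀)), v_n = √((n+1)/(n+λ₁)), λ₁ > λ₀ > 0. If λ₁ - λ₀ < 2, then there is no bounded operator X with T₀X - XT₁ = S, where S f_n = s_n e_n, s_n = √(a_n(λ₀)/a_n(λ₁)). -/

import Mathlib

/-- The Taylor coefficient `a_n(λ) = (λ)_n / n!` of `(1 - x)^{-λ}`. -/
noncomputable def bergmanCoeff (lam : ℝ) (n : ℕ) : ℝ :=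
  (ascPochhammer ℝ n).eval lam / n.factorial


lemma bc_pos {lam : ℝ} (h : 0 < lam) (n : ℕ) : 0 < bergmanCoeff lam n := by
  have h1 : (0:ℝ) < n.factorial := by positivity
  exact div_pos (ascPochhammer_pos n lam h) h1

lemma bc_succ (lam : ℝ) (n : ℕ) :
    bergmanCoeff lam (n + 1) = bergmanCoeff lam n * (lam + n) / (n + 1) := by
  unfold bergmanCoeff
  rw [ascPochhammer_succ_eval, Nat.factorial_succ]
  have h1 : ((n:ℝ) + 1) ≠ 0 := by positivity
  have h2 : ((n.factorial : ℝ)) ≠ 0 := by positivity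
  push_cast
  rw [div_mul_eq_mul_div, div_div, mul_comm ((n.factorial:ℝ))]

lemma key1 {lam₀ lam₁ : ℝ} (h0 : 0 < lam₀) (h01 : lam₀ < lam₁) (n : ℕ) :
    Real.sqrt (((n:ℝ) + 1) / ((n:ℝ) + lam₀)) *
      (((n:ℝ) + 1) * Real.sqrt (bergmanCoeff lam₀ (n + 1) / bergmanCoeff lam₁ n)) =
    ((n:ℝ) + 1) * Real.sqrt (bergmanCoeff lam₀ n / bergmanCoeff lam₁ n) := by
  have h1 : 0 < lam₁ := h0.trans h01
  have hA : (0:ℝ) ≤ ((n:ℝ) + 1) / ((n:ℝ) + lam₀) := by positivity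
  rw [mul_left_comm, ← Real.sqrt_mul hA]
  congr 2
  rw [bc_succ]
  have hb := (bc_pos h1 n).ne'
  have hl : ((n:ℝ) + lam₀) ≠ 0 := by positivity
  have hn : ((n:ℝ) + 1) ≠ 0 := by positivity
  field_simp
  ring

lemma key2 {lam₀ lam₁ : ℝ} (h0 : 0 < lam₀) (h01 : lam₀ < lam₁) (n : ℕ) :
    Real.sqrt (((n:ℝ) + 1) / ((n:ℝ) + lam₁)) *
      (((n:ℝ) + 1) * Real.sqrt (bergmanCoeff lam₀ (n + 1) / bergmanCoeff lam₁ n)) =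
    ((n:ℝ) + 1) * Real.sqrt (bergmanCoeff lam₀ (n + 1) / bergmanCoeff lam₁ (n + 1)) := by
  have h1 : 0 < lam₁ := h0.trans h01
  have hA : (0:ℝ) ≤ ((n:ℝ) + 1) / ((n:ℝ) + lam₁) := by positivity
  rw [mul_left_comm, ← Real.sqrt_mul hA]
  congr 2
  rw [bc_succ lam₁]
  have hb := (bc_pos h1 n).ne'
  have hl : ((n:ℝ) + lam₁) ≠ 0 := by positivity
  have hn : ((n:ℝ) + 1) ≠ 0 := by positivity
  field_simp
  ring

lemma gg_unbounded {lam₀ lam₁ : ℝ} (h0 : 0 < lam₀) (h01 : lam₀ < lam₁)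
    (hgap : lam₁ - lam₀ < 2) (M : ℝ) :
    ∃ n : ℕ, M < ((n:ℝ) + 1) * Real.sqrt (bergmanCoeff lam₀ (n + 1) / bergmanCoeff lam₁ n) := by
  have h1 : 0 < lam₁ := h0.trans h01
  set g : ℕ → ℝ := fun n =>
    ((n:ℝ) + 1) * Real.sqrt (bergmanCoeff lam₀ (n + 1) / bergmanCoeff lam₁ n) with hg
  set G : ℕ → ℝ := fun n => ((n:ℝ) + 1) ^ 2 * (bergmanCoeff lam₀ (n + 1) / bergmanCoeff lam₁ n)
    with hG
  have hGpos : ∀ n, 0 < G n := by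
    intro n
    have := bc_pos h0 (n+1); have := bc_pos h1 n
    positivity
  have hgnn : ∀ n, 0 ≤ g n := by
    intro n
    have : (0:ℝ) ≤ Real.sqrt (bergmanCoeff lam₀ (n + 1) / bergmanCoeff lam₁ n) := Real.sqrt_nonneg _
    positivity
  have hgG : ∀ n, g n ^ 2 = G n := by
    intro n
    have hA : (0:ℝ) ≤ bergmanCoeff lam₀ (n + 1) / bergmanCoeff lam₁ n :=
      le_of_lt (div_pos (bc_pos h0 (n+1)) (bc_pos h1 n))
    simp only [hg, hG, mul_pow, Real.sq_sqrt hA]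
  set c : ℝ := lam₀ + 2 - lam₁ with hcdef
  have hc : 0 < c := by simp [hcdef]; linarith
  -- step inequality
  have hstep : ∀ n : ℕ, G n * (1 + c / ((n:ℝ) + lam₁)) ≤ G (n + 1) := by
    intro n
    have hD : (0:ℝ) < (((n:ℝ) + 1) * ((n:ℝ) + lam₁)) := by positivity
    have hid : G (n + 1) * (((n:ℝ) + 1) * ((n:ℝ) + lam₁)) =
        G n * (((n:ℝ) + 2) * ((n:ℝ) + 1 + lam₀)) := by
      simp only [hG]
      rw [bc_succ lam₀ (n+1), bc_succ lam₁ n]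
      have hb0 := (bc_pos h0 (n+1)).ne'
      have hb1 := (bc_pos h1 n).ne'
      have hl : ((n:ℝ) + lam₁) ≠ 0 := by positivity
      have hn1 : ((n:ℝ) + 1) ≠ 0 := by positivity
      have hn2 : ((n:ℝ) + 2) ≠ 0 := by positivity
      push_cast
      field_simp
      ring
    rw [← mul_le_mul_iff_of_pos_right hD, hid]
    have hlp : (0:ℝ) < (n:ℝ) + lam₁ := by positivity
    have h3 : G n * ((n:ℝ) + 1) * (c / ((n:ℝ) + lam₁) * ((n:ℝ) + lam₁)) =
        G n * ((n:ℝ) + 1) * c := by rw [div_mul_cancel₀ _ hlp.ne']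
    nlinarith [h3, hGpos n, mul_pos (hGpos n) h0]
  set H : ℕ → ℝ := fun n => ∑ j ∈ Finset.range n, 1 / ((j:ℝ) + lam₁) with hH
  have hHnn : ∀ n, 0 ≤ H n := by
    intro n
    apply Finset.sum_nonneg
    intro j _
    positivity
  have hlower : ∀ n, G 0 * (1 + c * H n) ≤ G n := by
    intro n
    induction n with
    | zero => simp [hH]
    | succ n ih =>
      have hHsucc : H (n + 1) = H n + 1 / ((n:ℝ) + lam₁) := Finset.sum_range_succ _ n
      have ht : (0:ℝ) ≤ c / ((n:ℝ) + lam₁) := by positivity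
      have h4 : G 0 * (1 + c * H n) * (1 + c / ((n:ℝ) + lam₁)) ≤ G n * (1 + c / ((n:ℝ) + lam₁)) :=
        mul_le_mul_of_nonneg_right ih (by positivity)
      have h5 := hstep n
      have hlp : (0:ℝ) < (n:ℝ) + lam₁ := by positivity
      have h7 : G 0 * (1 + c * H n) * (1 + c / ((n:ℝ) + lam₁)) =
          G 0 * (1 + c * H n + c / ((n:ℝ) + lam₁)) + G 0 * (c * H n * (c / ((n:ℝ) + lam₁))) := by
        ring
      have h8 : G 0 * (1 + c * (H n + 1 / ((n:ℝ) + lam₁))) =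
          G 0 * (1 + c * H n + c / ((n:ℝ) + lam₁)) := by ring
      rw [hHsucc, h8]
      have h9 : 0 ≤ G 0 * (c * H n * (c / ((n:ℝ) + lam₁))) :=
        mul_nonneg (hGpos 0).le (mul_nonneg (mul_nonneg hc.le (hHnn n)) ht)
      linarith
  -- conclude
  set M' : ℝ := max M 0 with hM'
  have hM'nn : 0 ≤ M' := le_max_right _ _
  set K : ℝ := max 1 lam₁ with hK
  have hK1 : (1:ℝ) ≤ K := le_max_left _ _
  have hKl : lam₁ ≤ K := le_max_right _ _
  have hKpos : (0:ℝ) < K := lt_of_lt_of_le one_pos hK1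
  set B : ℝ := K * ((M' ^ 2 / G 0 - 1) / c + 1) with hB
  obtain ⟨n, hn⟩ := (Real.tendsto_sum_range_one_div_nat_succ_atTop.eventually_ge_atTop B).exists
  refine ⟨n, ?_⟩
  have hSH : (∑ i ∈ Finset.range n, 1 / ((i:ℝ) + 1)) / K ≤ H n := by
    rw [div_eq_mul_one_div, Finset.sum_mul]
    apply Finset.sum_le_sum
    intro j _
    rw [one_div_mul_one_div]
    apply one_div_le_one_div_of_le
    · positivity
    · nlinarith [hK1, hKl, mul_nonneg (Nat.cast_nonneg (α := ℝ) j) (sub_nonneg.mpr hK1)]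
  have hBK : B / K = (M' ^ 2 / G 0 - 1) / c + 1 := by
    rw [hB, mul_div_cancel_left₀ _ hKpos.ne']
  have hHn : (M' ^ 2 / G 0 - 1) / c + 1 ≤ H n := by
    rw [← hBK]
    exact le_trans (by gcongr) hSH
  have h10 : (M' ^ 2 / G 0 - 1) / c < H n := by linarith
  have h11 : M' ^ 2 / G 0 - 1 < c * H n := by
    rw [div_lt_iff₀ hc] at h10; linarith [h10]
  have h12 : M' ^ 2 < G 0 * (1 + c * H n) := by
    have h12a : M' ^ 2 / G 0 < 1 + c * H n := by linarith
    have := (div_lt_iff₀ (hGpos 0)).mp h12a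
    linarith
  have h13 : M' ^ 2 < g n ^ 2 := by rw [hgG]; exact lt_of_lt_of_le (h12.trans_le (hlower n)) le_rfl
  have h14 : M' < g n := lt_of_pow_lt_pow_left₀ 2 (hgnn n) h13
  exact lt_of_le_of_lt (le_max_left M 0) h14

/-- Let `T₀, T₁` be backward weighted shifts with weights `u_n = √((n+1)/(n+λ₀))`,
`v_n = √((n+1)/(n+λ₁))`, `λ₁ > λ₀ > 0`.  If `λ₁ - λ₀ < 2`, then there is no bounded
operator `X` with `T₀X - XT₁ = S`, where `S f_n = √(a_n(λ₀)/a_n(λ₁)) e_n`. -/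
theorem stmt_8 {H₀ H₁ : Type*}
    [NormedAddCommGroup H₀] [InnerProductSpace ℂ H₀] [CompleteSpace H₀]
    [NormedAddCommGroup H₁] [InnerProductSpace ℂ H₁] [CompleteSpace H₁]
    (lam₀ lam₁ : ℝ) (h0 : 0 < lam₀) (h01 : lam₀ < lam₁) (hgap : lam₁ - lam₀ < 2)
    (e : ℕ → H₀) (f : ℕ → H₁) (he : Orthonormal ℂ e) (hf : Orthonormal ℂ f)
    (hte : (Submodule.span ℂ (Set.range e)).topologicalClosure = ⊤)
    (htf : (Submodule.span ℂ (Set.range f)).topologicalClosure = ⊤)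
    (T₀ : H₀ →L[ℂ] H₀) (T₁ : H₁ →L[ℂ] H₁) (S : H₁ →L[ℂ] H₀)
    (hT₀z : T₀ (e 0) = 0)
    (hT₀ : ∀ n : ℕ, T₀ (e (n + 1)) =
      ((Real.sqrt (((n : ℝ) + 1) / ((n : ℝ) + lam₀)) : ℝ) : ℂ) • e n)
    (hT₁z : T₁ (f 0) = 0)
    (hT₁ : ∀ n : ℕ, T₁ (f (n + 1)) =
      ((Real.sqrt (((n : ℝ) + 1) / ((n : ℝ) + lam₁)) : ℝ) : ℂ) • f n)
    (hS : ∀ n : ℕ, S (f n) =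
      ((Real.sqrt (bergmanCoeff lam₀ n / bergmanCoeff lam₁ n) : ℝ) : ℂ) • e n) :
    ¬ ∃ X : H₁ →L[ℂ] H₀, T₀ ∘L X - X ∘L T₁ = S := by
  rintro ⟨X, hX⟩
  have h1 : 0 < lam₁ := h0.trans h01
  have hee : ∀ i j : ℕ, (inner ℂ (e i) (e j) : ℂ) = if i = j then 1 else 0 :=
    orthonormal_iff_ite.mp he
  -- the adjoint of T₀ on the basis
  have hadj : ∀ ℓ : ℕ, (ContinuousLinearMap.adjoint T₀) (e ℓ)
      = ((Real.sqrt (((ℓ:ℝ) + 1) / ((ℓ:ℝ) + lam₀)) : ℝ) : ℂ) • e (ℓ + 1) := by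
    intro ℓ
    set w := (ContinuousLinearMap.adjoint T₀) (e ℓ)
      - ((Real.sqrt (((ℓ:ℝ) + 1) / ((ℓ:ℝ) + lam₀)) : ℝ) : ℂ) • e (ℓ + 1) with hw
    have hbasis : ∀ m : ℕ, (inner ℂ w (e m) : ℂ) = 0 := by
      intro m
      rw [hw, inner_sub_left, inner_smul_left, ContinuousLinearMap.adjoint_inner_left,
        Complex.conj_ofReal]
      match m with
      | 0 => simp [hT₀z, hee]
      | Nat.succ k =>
        rw [hT₀ k, inner_smul_right, hee, hee]
        by_cases h : ℓ = k
        · subst h; simp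
        · have h' : ℓ + 1 ≠ k + 1 := by omega
          simp [h, h']
    have hmem : w ∈ (Submodule.span ℂ (Set.range e))ᗮ := by
      rw [Submodule.mem_orthogonal']
      intro x hx
      have hle : Submodule.span ℂ (Set.range e) ≤ LinearMap.ker (innerSL ℂ w : H₀ →ₗ[ℂ] ℂ) := by
        rw [Submodule.span_le]
        rintro _ ⟨m, rfl⟩
        exact LinearMap.mem_ker.mpr (hbasis m)
      have := hle hx
      simpa using this
    rw [Submodule.topologicalClosure_eq_top_iff.mp hte, Submodule.mem_bot] at hmem
    exact sub_eq_zero.mp (hw.symm.trans hmem)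
  -- inner products against T₀
  have hip : ∀ (ℓ : ℕ) (z : H₀), (inner ℂ (e ℓ) (T₀ z) : ℂ)
      = ((Real.sqrt (((ℓ:ℝ) + 1) / ((ℓ:ℝ) + lam₀)) : ℝ) : ℂ) * inner ℂ (e (ℓ + 1)) z := by
    intro ℓ z
    rw [← ContinuousLinearMap.adjoint_inner_left, hadj, inner_smul_left, Complex.conj_ofReal]
  set y : ℕ → ℂ := fun n => inner ℂ (e (n + 1)) (X (f n)) with hy
  have happ : ∀ n : ℕ, T₀ (X (f n)) - X (T₁ (f n)) = S (f n) := by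
    intro n
    have := ContinuousLinearMap.ext_iff.mp hX (f n)
    simpa using this
  -- base identity : u₀ y₀ = s₀
  have hb0 : ((Real.sqrt ((((0:ℕ):ℝ) + 1) / (((0:ℕ):ℝ) + lam₀)) : ℝ) : ℂ) * y 0
      = ((Real.sqrt (bergmanCoeff lam₀ 0 / bergmanCoeff lam₁ 0) : ℝ) : ℂ) := by
    have h2 := happ 0
    rw [hT₁z, map_zero, sub_zero, hS 0] at h2
    have h3 := congrArg (fun z => (inner ℂ (e 0) z : ℂ)) h2
    simp only [hip 0, inner_smul_right, hee] at h3
    simpa using h3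
  -- recursion : u_{n+1} y_{n+1} = s_{n+1} + v_n y_n
  have hrec : ∀ n : ℕ,
      ((Real.sqrt ((((n+1:ℕ):ℝ) + 1) / (((n+1:ℕ):ℝ) + lam₀)) : ℝ) : ℂ) * y (n + 1)
      = ((Real.sqrt (bergmanCoeff lam₀ (n+1) / bergmanCoeff lam₁ (n+1)) : ℝ) : ℂ)
        + ((Real.sqrt (((n:ℝ) + 1) / ((n:ℝ) + lam₁)) : ℝ) : ℂ) * y n := by
    intro n
    have h2 := happ (n + 1)
    rw [hT₁ n, hS (n + 1), map_smul, sub_eq_iff_eq_add] at h2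
    have h3 := congrArg (fun z => (inner ℂ (e (n + 1)) z : ℂ)) h2
    simp only [hip (n + 1), inner_add_right, inner_smul_right, hee] at h3
    simpa using h3
  -- solve the recursion
  have hkey : ∀ n : ℕ, y n =
      (((((n:ℝ) + 1) * Real.sqrt (bergmanCoeff lam₀ (n + 1) / bergmanCoeff lam₁ n)) : ℝ) : ℂ) := by
    intro n
    induction n with
    | zero =>
      have hu : (0:ℝ) < Real.sqrt ((((0:ℕ):ℝ) + 1) / (((0:ℕ):ℝ) + lam₀)) :=
        Real.sqrt_pos.mpr (by positivity)
      have k1 := key1 h0 h01 0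
      have k1' := congrArg (fun r : ℝ => (r : ℂ)) k1
      push_cast at k1'
      apply mul_left_cancel₀ (a := ((Real.sqrt ((((0:ℕ):ℝ) + 1) / (((0:ℕ):ℝ) + lam₀)) : ℝ) : ℂ))
        (by exact_mod_cast hu.ne')
      rw [hb0]
      push_cast
      rw [k1']
      norm_num
    | succ n ih =>
      have hu : (0:ℝ) < Real.sqrt ((((n+1:ℕ):ℝ) + 1) / (((n+1:ℕ):ℝ) + lam₀)) :=
        Real.sqrt_pos.mpr (by positivity)
      have k1 := key1 h0 h01 (n + 1)
      have k2 := key2 h0 h01 n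
      have e2 : Real.sqrt ((((n+1:ℕ):ℝ) + 1) / (((n+1:ℕ):ℝ) + lam₀)) *
          ((((n+1:ℕ):ℝ) + 1) * Real.sqrt (bergmanCoeff lam₀ (n + 2) / bergmanCoeff lam₁ (n + 1)))
          = Real.sqrt (bergmanCoeff lam₀ (n + 1) / bergmanCoeff lam₁ (n + 1))
            + Real.sqrt (((n:ℝ) + 1) / ((n:ℝ) + lam₁)) *
              (((n:ℝ) + 1) * Real.sqrt (bergmanCoeff lam₀ (n + 1) / bergmanCoeff lam₁ n)) := by
        push_cast at k1 ⊢
        linear_combination k1 - k2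
      have e2' := congrArg (fun r : ℝ => (r : ℂ)) e2
      push_cast at e2'
      apply mul_left_cancel₀
        (a := ((Real.sqrt ((((n+1:ℕ):ℝ) + 1) / (((n+1:ℕ):ℝ) + lam₀)) : ℝ) : ℂ))
        (by exact_mod_cast hu.ne')
      rw [hrec n, ih]
      push_cast
      rw [← e2']
  -- the diagonal is bounded by ‖X‖
  have hbound : ∀ n : ℕ, ((n:ℝ) + 1) * Real.sqrt (bergmanCoeff lam₀ (n + 1) / bergmanCoeff lam₁ n)
      ≤ ‖X‖ := by
    intro n
    have h5 : ‖y n‖ ≤ ‖X‖ := by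
      calc ‖y n‖ ≤ ‖e (n + 1)‖ * ‖X (f n)‖ := norm_inner_le_norm _ _
        _ = ‖X (f n)‖ := by rw [he.1 (n + 1), one_mul]
        _ ≤ ‖X‖ * ‖f n‖ := X.le_opNorm _
        _ = ‖X‖ := by rw [hf.1 n, mul_one]
    rw [hkey n] at h5
    rw [Complex.norm_real] at h5
    have hnn : (0:ℝ) ≤ ((n:ℝ) + 1) * Real.sqrt (bergmanCoeff lam₀ (n + 1) / bergmanCoeff lam₁ n) := by
      positivity
    rwa [Real.norm_eq_abs, abs_of_nonneg hnn] at h5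
  obtain ⟨n, hn⟩ := gg_unbounded h0 h01 hgap ‖X‖
  exact absurd (hbound n) (not_le.mpr hn)
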